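/- The algebraic bracket M'_1(φ,ψ) = Σ_{A,B} q^{AB} (j(e_A)φ) ∧ (i(e_B)ψ) on the exterior algebra of a finite-dimensional inner product space satisfies the superderivation rule in its second argument: M'_1(φ, ψ ∧ χ) = M'_1(φ,ψ) ∧ χ + (-1)^{d1 d2} ψ ∧ M'_1(φ,χ) for homogeneous φ, ψ, χ of degrees d1, d2, d3. -/

import Mathlib

set_option synthInstance.maxHeartbeats 1000000
set_option maxHeartbeats 1000000
open CliffordAlgebra

/-- Interior product (left antiderivation) `i(v)` on the exterior algebra `Λ V*` of the dual
of `V`, given by contraction with the evaluation functional of `v ∈ V`. -/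
noncomputable def intProd (R V : Type*) [CommRing R] [AddCommGroup V] [Module R V] (v : V) :
    ExteriorAlgebra R (Module.Dual R V) →ₗ[R] ExteriorAlgebra R (Module.Dual R V) :=
  contractLeft (Q := (0 : QuadraticForm R (Module.Dual R V))) (Module.Dual.eval R V v)

/-- The right antiderivation `j(v) = P ∘ i(v)`, where `P` is the parity (grade involution)
automorphism of `Λ V*`. -/
noncomputable def intProdR (R V : Type*) [CommRing R] [AddCommGroup V] [Module R V] (v : V) :
    ExteriorAlgebra R (Module.Dual R V) →ₗ[R] ExteriorAlgebra R (Module.Dual R V) :=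
  (involute (Q := (0 : QuadraticForm R (Module.Dual R V)))).toLinearMap ∘ₗ intProd R V v

/-- The algebraic bracket `M'₁(φ,ψ) = Σ_{A,B} q^{AB} (j(e_A)φ) ∧ (i(e_B)ψ)` on `Λ V*`,
where `q^{AB}` are the entries of the inverse of the Gram matrix of `q` in the basis `e`. -/
noncomputable def M1alg {V : Type*} [AddCommGroup V] [Module ℝ V] {ι : Type*} [Fintype ι]
    [DecidableEq ι] (e : Module.Basis ι ℝ V) (q : LinearMap.BilinForm ℝ V)
    (φ ψ : ExteriorAlgebra ℝ (Module.Dual ℝ V)) : ExteriorAlgebra ℝ (Module.Dual ℝ V) :=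
  ∑ A : ι, ∑ B : ι,
    ((BilinForm.toMatrix e q)⁻¹ A B) • (intProdR ℝ V (e A) φ * intProd ℝ V (e B) ψ)

section AuxSuperDeriv

variable {R M : Type*} [CommRing R] [AddCommGroup M] [Module R M]

theorem aux_contract_mul (Q : QuadraticForm R M) (d : Module.Dual R M)
    (x y : CliffordAlgebra Q) :
    contractLeft d (x * y) = contractLeft d x * y + involute x * contractLeft d y := by
  induction x using CliffordAlgebra.induction generalizing y with
  | algebraMap r =>
    rw [contractLeft_algebraMap_mul, contractLeft_algebraMap, zero_mul, zero_add,
      involute.commutes]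
  | ι v =>
    rw [contractLeft_ι_mul, contractLeft_ι, involute_ι, Algebra.smul_def, neg_mul,
      sub_eq_add_neg]
  | mul a b ha hb =>
    rw [mul_assoc, ha, hb, ha b, map_mul]
    noncomm_ring
  | add a b ha hb =>
    simp only [add_mul, map_add, ha, hb]
    abel

theorem aux_involute_mem {n : ℕ} {x : ExteriorAlgebra R M} (hx : x ∈ ⋀[R]^n M) :
    involute (Q := (0 : QuadraticForm R M)) x = ((-1 : R) ^ n) • x := by
  induction hx using Submodule.pow_induction_on_left' with
  | algebraMap r => simp
  | add x y i hx hy ihx ihy => rw [map_add, ihx, ihy, smul_add]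
  | mem_mul m hm i x hx ih =>
    obtain ⟨v, rfl⟩ := hm
    rw [map_mul, involute_ι, ih, pow_succ, mul_comm, mul_smul, neg_one_smul, neg_mul,
      mul_smul_comm]

theorem aux_ι_mul {n : ℕ} (v : M) {y : ExteriorAlgebra R M} (hy : y ∈ ⋀[R]^n M) :
    ExteriorAlgebra.ι R v * y = ((-1 : R) ^ n) • (y * ExteriorAlgebra.ι R v) := by
  induction hy using Submodule.pow_induction_on_left' with
  | algebraMap r => simp [Algebra.commutes]
  | add x y i hx hy ihx ihy => rw [mul_add, add_mul, ihx, ihy, smul_add]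
  | mem_mul m hm i x hx ih =>
    obtain ⟨w, rfl⟩ := hm
    have swap : ExteriorAlgebra.ι R v * ExteriorAlgebra.ι R w
        = -(ExteriorAlgebra.ι R w * ExteriorAlgebra.ι R v) :=
      eq_neg_of_add_eq_zero_left (ExteriorAlgebra.ι_add_mul_swap v w)
    calc ExteriorAlgebra.ι R v * (ExteriorAlgebra.ι R w * x)
        = -(ExteriorAlgebra.ι R w * (ExteriorAlgebra.ι R v * x)) := by
          rw [← mul_assoc, swap, neg_mul, mul_assoc]
      _ = ((-1 : R) ^ (i + 1)) • (ExteriorAlgebra.ι R w * x * ExteriorAlgebra.ι R v) := by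
          rw [ih, mul_smul_comm]
          simp [pow_succ, mul_smul, mul_assoc]

theorem aux_super_comm {m n : ℕ} {x y : ExteriorAlgebra R M} (hx : x ∈ ⋀[R]^m M)
    (hy : y ∈ ⋀[R]^n M) : x * y = ((-1 : R) ^ (m * n)) • (y * x) := by
  induction hx using Submodule.pow_induction_on_left' with
  | algebraMap r => simp [Algebra.commutes]
  | add a b i ha hb iha ihb => rw [add_mul, mul_add, iha, ihb, smul_add]
  | mem_mul m' hm' i a ha ih =>
    obtain ⟨v, rfl⟩ := hm'
    rw [mul_assoc, ih, mul_smul_comm, ← mul_assoc, aux_ι_mul v hy, smul_mul_assoc,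
      smul_smul, mul_assoc, ← pow_add]
    congr 2
    rw [Nat.succ_eq_add_one]
    ring

theorem aux_contract_mem (d : Module.Dual R M) {n : ℕ} {x : ExteriorAlgebra R M}
    (hx : x ∈ ⋀[R]^n M) :
    contractLeft (Q := (0 : QuadraticForm R M)) d x ∈ ⋀[R]^(n - 1) M ∧
      (n = 0 → contractLeft (Q := (0 : QuadraticForm R M)) d x = 0) := by
  induction hx using Submodule.pow_induction_on_left' with
  | algebraMap r =>
    refine ⟨?_, fun _ => ?_⟩ <;> simp [contractLeft_algebraMap]
  | add a b i ha hb iha ihb =>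
    exact ⟨by rw [map_add]; exact add_mem iha.1 ihb.1,
      fun h => by rw [map_add, iha.2 h, ihb.2 h, add_zero]⟩
  | mem_mul m' hm' i a ha ih =>
    obtain ⟨v, rfl⟩ := hm'
    refine ⟨?_, fun h => absurd h (Nat.succ_ne_zero i)⟩
    have key : contractLeft (Q := (0 : QuadraticForm R M)) d (ExteriorAlgebra.ι R v * a)
        = d v • a - ExteriorAlgebra.ι R v * contractLeft (Q := (0 : QuadraticForm R M)) d a :=
      contractLeft_ι_mul d v a
    rw [key, Nat.succ_sub_one]
    refine sub_mem (Submodule.smul_mem _ _ ha) ?_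
    cases i with
    | zero => rw [ih.2 rfl, mul_zero]; exact zero_mem _
    | succ k =>
      have : contractLeft (Q := (0 : QuadraticForm R M)) d a ∈ ⋀[R]^k M := by
        simpa using ih.1
      have hmul := Submodule.mul_mem_mul (LinearMap.mem_range_self (ExteriorAlgebra.ι R) v) this
      rwa [← pow_succ'] at hmul
end AuxSuperDeriv

/-- The algebraic bracket `M'₁` satisfies the superderivation rule in its
second argument: `M'₁(φ, ψ ∧ χ) = M'₁(φ,ψ) ∧ χ + (-1)^(d₁d₂) ψ ∧ M'₁(φ,χ)` for homogeneous
`φ, ψ, χ` of degrees `d₁, d₂, d₃`. -/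

theorem M1alg_superderivation {V : Type*} [AddCommGroup V] [Module ℝ V]
    [FiniteDimensional ℝ V] {ι : Type*} [Fintype ι] [DecidableEq ι]
    (e : Module.Basis ι ℝ V) (q : LinearMap.BilinForm ℝ V) (hq_symm : q.IsSymm)
    (hq_nondeg : q.Nondegenerate)
    (d1 d2 d3 : ℕ) (φ ψ χ : ExteriorAlgebra ℝ (Module.Dual ℝ V))
    (hφ : φ ∈ ⋀[ℝ]^d1 (Module.Dual ℝ V)) (hψ : ψ ∈ ⋀[ℝ]^d2 (Module.Dual ℝ V))
    (hχ : χ ∈ ⋀[ℝ]^d3 (Module.Dual ℝ V)) :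
    M1alg e q φ (ψ * χ) =
      M1alg e q φ ψ * χ + ((-1 : ℝ) ^ (d1 * d2)) • (ψ * M1alg e q φ χ) := by
  cases d1 with
  | zero =>
    have hz : ∀ A : ι, intProdR ℝ V (e A) φ = 0 := fun A => by
      simp only [intProdR, intProd, LinearMap.comp_apply, AlgHom.toLinearMap_apply]
      rw [(aux_contract_mem (Module.Dual.eval ℝ V (e A)) hφ).2 rfl, map_zero]
    have hM : ∀ x, M1alg e q φ x = 0 := fun x => by
      simp only [M1alg, hz, zero_mul, smul_zero, Finset.sum_const_zero]
    simp [hM]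
  | succ k =>
    have hj : ∀ A : ι, intProdR ℝ V (e A) φ ∈ ⋀[ℝ]^k (Module.Dual ℝ V) := fun A => by
      have h1 : contractLeft (Q := (0 : QuadraticForm ℝ (Module.Dual ℝ V)))
          (Module.Dual.eval ℝ V (e A)) φ ∈ ⋀[ℝ]^k (Module.Dual ℝ V) := by
        simpa using (aux_contract_mem (Module.Dual.eval ℝ V (e A)) hφ).1
      simp only [intProdR, intProd, LinearMap.comp_apply, AlgHom.toLinearMap_apply]
      rw [aux_involute_mem h1]
      exact Submodule.smul_mem _ _ h1
    have key : ∀ A B : ι, intProdR ℝ V (e A) φ * intProd ℝ V (e B) (ψ * χ)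
        = intProdR ℝ V (e A) φ * intProd ℝ V (e B) ψ * χ
          + ((-1 : ℝ) ^ ((k + 1) * d2)) •
            (ψ * (intProdR ℝ V (e A) φ * intProd ℝ V (e B) χ)) := by
      intro A B
      simp only [intProd]
      rw [aux_contract_mul, mul_add, ← mul_assoc, ← mul_assoc,
        aux_involute_mem hψ, mul_smul_comm, smul_mul_assoc,
        aux_super_comm (hj A) hψ, smul_mul_assoc, smul_smul, ← pow_add,
        show d2 + k * d2 = (k + 1) * d2 from by ring, mul_assoc ψ]
    simp only [M1alg]
    rw [Finset.sum_mul, Finset.mul_sum, Finset.smul_sum, ← Finset.sum_add_distrib]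
    refine Finset.sum_congr rfl fun A _ => ?_
    rw [Finset.sum_mul, Finset.mul_sum, Finset.smul_sum, ← Finset.sum_add_distrib]
    refine Finset.sum_congr rfl fun B _ => ?_
    rw [key A B, smul_add, smul_mul_assoc, mul_smul_comm, smul_comm]
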